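/- arXiv:1604.04209 — 2 statements merged into one kernel-verified Lean document; each statement's English description precedes it below -/
import Mathlib

section
/- Let $\mathcal{A}$ be an abelian category with enough injectives in which inverse limits over $\mathbb{N}$ exist. An object $(I_n, d_n)$ of the category $\mathcal{A}^{\mathbb{N}}$ of inverse systems indexed by $\mathbb{N}$ is injective if and only if each $I_n$ is injective in $\mathcal{A}$ and each transition map $d_n : I_{n+1} \to I_n$ is a split epimorphism. -/
open CategoryTheory CategoryTheory.Limits Opposite ZeroObject

universe v u
variable {𝒜 : Type u} [Category.{v} 𝒜] [Abelian 𝒜]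

namespace InvSysAux

noncomputable def tObj (a : 𝒜) (n m : ℕ) : 𝒜 := if m ≤ n then a else 0

lemma tObj_eq (a : 𝒜) {n m : ℕ} (h : m ≤ n) : tObj a n m = a := if_pos h

lemma tObj_isZero (a : 𝒜) {n m : ℕ} (h : ¬ m ≤ n) : IsZero (tObj a n m) := by
  rw [tObj, if_neg h]; exact isZero_zero 𝒜

noncomputable def tMap (a : 𝒜) (n : ℕ) : ∀ m, tObj a n (m+1) ⟶ tObj a n m := fun m =>
  if h : m + 1 ≤ n then
    eqToHom ((tObj_eq a h).trans (tObj_eq a (Nat.le_of_succ_le h)).symm)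
  else 0

noncomputable abbrev T (a : 𝒜) (n : ℕ) : ℕᵒᵖ ⥤ 𝒜 where
  obj m := tObj a n m.unop
  map f := (Functor.ofOpSequence (tMap a n)).map f
  map_id m := (Functor.ofOpSequence (tMap a n)).map_id m
  map_comp f g := (Functor.ofOpSequence (tMap a n)).map_comp f g

@[simp] lemma T_obj (a : 𝒜) (n m : ℕ) : (T a n).obj (op m) = tObj a n m := rfl

@[simp] lemma T_map_succ (a : 𝒜) (n m : ℕ) :
    (T a n).map (homOfLE (Nat.le_succ m)).op = tMap a n m :=
  Functor.ofOpSequence_map_homOfLE_succ (tMap a n) m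

/-- A map `a ⟶ I.obj (op n)` induces `T a n ⟶ I`. -/
noncomputable def tHom (a : 𝒜) (n : ℕ) (I : ℕᵒᵖ ⥤ 𝒜) (g : a ⟶ I.obj (op n)) :
    T a n ⟶ I :=
  NatTrans.ofOpSequence
    (fun m => if h : m ≤ n then
        eqToHom (tObj_eq a h) ≫ g ≫ I.map (homOfLE h).op else 0)
    (by
      intro m
      dsimp only
      by_cases h : m + 1 ≤ n
      · have hm : m ≤ n := Nat.le_of_succ_le h
        rw [show (T a n).map (homOfLE (m.le_add_right 1)).op = tMap a n m from
          Functor.ofOpSequence_map_homOfLE_succ (tMap a n) m]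
        rw [tMap, dif_pos h, dif_pos h, dif_pos hm]
        simp only [eqToHom_trans_assoc, Category.assoc, ← Functor.map_comp, ← op_comp,
          homOfLE_comp]
      · rw [show (T a n).map (homOfLE (m.le_add_right 1)).op = tMap a n m from
          Functor.ofOpSequence_map_homOfLE_succ (tMap a n) m]
        rw [tMap, dif_neg h, dif_neg h, zero_comp, Limits.zero_comp])

@[simp] lemma tHom_app (a : 𝒜) (n : ℕ) (I : ℕᵒᵖ ⥤ 𝒜) (g : a ⟶ I.obj (op n))
    {m : ℕ} (h : m ≤ n) :
    (tHom a n I g).app (op m) = eqToHom (tObj_eq a h) ≫ g ≫ I.map (homOfLE h).op := by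
  simp [tHom, dif_pos h]

/-- A map `f : a ⟶ b` and `n ≤ k` induce `T a n ⟶ T b k`. -/
noncomputable def tMapHom {a b : 𝒜} (f : a ⟶ b) (n k : ℕ) (hnk : n ≤ k) :
    T a n ⟶ T b k :=
  NatTrans.ofOpSequence
    (fun m => if h : m ≤ n then
        eqToHom (tObj_eq a h) ≫ f ≫ eqToHom (tObj_eq b (h.trans hnk)).symm else 0)
    (by
      intro m
      dsimp only
      rw [show (T a n).map (homOfLE (m.le_add_right 1)).op = tMap a n m from
        Functor.ofOpSequence_map_homOfLE_succ (tMap a n) m,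
        show (T b k).map (homOfLE (m.le_add_right 1)).op = tMap b k m from
        Functor.ofOpSequence_map_homOfLE_succ (tMap b k) m]
      by_cases h : m + 1 ≤ n
      · have hm : m ≤ n := Nat.le_of_succ_le h
        rw [tMap, tMap, dif_pos h, dif_pos hm, dif_pos h, dif_pos (h.trans hnk)]
        simp
      · rw [tMap, dif_neg h, dif_neg h, zero_comp, Limits.zero_comp])

@[simp] lemma tMapHom_app {a b : 𝒜} (f : a ⟶ b) (n k : ℕ) (hnk : n ≤ k)
    {m : ℕ} (h : m ≤ n) :
    (tMapHom f n k hnk).app (op m) =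
      eqToHom (tObj_eq a h) ≫ f ≫ eqToHom (tObj_eq b (h.trans hnk)).symm := by
  simp [tMapHom, dif_pos h]

instance tMapHom_mono {a b : 𝒜} (f : a ⟶ b) [Mono f] (n k : ℕ) (hnk : n ≤ k) :
    Mono (tMapHom f n k hnk) := by
  have H : ∀ X : ℕᵒᵖ, Mono ((tMapHom f n k hnk).app X) := by
    intro m
    obtain ⟨m⟩ := m
    by_cases h : m ≤ n
    · rw [tMapHom_app f n k hnk h]
      infer_instance
    · exact ⟨fun u v _ => (tObj_isZero a h).eq_of_tgt u v⟩
  exact NatTrans.mono_of_mono_app _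

lemma injective_component (I : ℕᵒᵖ ⥤ 𝒜) [Injective I] (n : ℕ) :
    Injective (I.obj (op n)) := by
  constructor
  intro X Y g f hf
  haveI := tMapHom_mono f n n le_rfl
  obtain ⟨H, hH⟩ := Injective.factors (tHom X n I g) (tMapHom f n n le_rfl)
  refine ⟨eqToHom (tObj_eq Y (le_refl n)).symm ≫ H.app (op n), ?_⟩
  have h := congrArg (fun t => t.app (op n)) hH
  simp only [NatTrans.comp_app] at h
  rw [tMapHom_app f n n le_rfl le_rfl, tHom_app X n I g le_rfl] at h
  simp only [homOfLE_refl, op_id, Functor.map_id, Category.comp_id, Category.assoc] at h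
  have h2 := congrArg (fun t => eqToHom (tObj_eq X (le_refl n)).symm ≫ t) h
  simpa using h2

lemma isSplitEpi_transition (I : ℕᵒᵖ ⥤ 𝒜) [Injective I] (n : ℕ) :
    IsSplitEpi (I.map (homOfLE (Nat.le_succ n)).op) := by
  set a := I.obj (op n) with ha
  haveI := tMapHom_mono (𝟙 a) n (n+1) (Nat.le_succ n)
  obtain ⟨H, hH⟩ := Injective.factors (tHom a n I (𝟙 a)) (tMapHom (𝟙 a) n (n+1) (Nat.le_succ n))
  have happn : H.app (op n) = eqToHom (tObj_eq a (Nat.le_succ n)) := by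
    have h := congrArg (fun t => t.app (op n)) hH
    simp only [NatTrans.comp_app] at h
    rw [tMapHom_app (𝟙 a) n (n+1) (Nat.le_succ n) le_rfl, tHom_app a n I (𝟙 a) le_rfl] at h
    simp only [homOfLE_refl, op_id, Functor.map_id, Category.comp_id, Category.id_comp,
      Category.assoc] at h
    have h2 := congrArg (fun t => eqToHom (tObj_eq a (le_refl n)).symm ≫ t) h
    have h3 := congrArg (fun t => eqToHom (tObj_eq a ((le_refl n).trans (Nat.le_succ n))) ≫ t) h2
    simp at h3
    exact h3.trans (Category.comp_id _)
  refine ⟨⟨⟨eqToHom (tObj_eq a (le_refl (n+1))).symm ≫ H.app (op (n+1)), ?_⟩⟩⟩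
  have hnat := H.naturality (homOfLE (Nat.le_succ n)).op
  rw [T_map_succ] at hnat
  rw [Category.assoc, ← hnat, tMap, dif_pos (le_refl (n+1)), happn]
  simp

section Backward

variable (I X Y : ℕᵒᵖ ⥤ 𝒜) (f : X ⟶ Y) (g : X ⟶ I)
  (sp : ∀ n : ℕ, SplitEpi (I.map (homOfLE (Nat.le_succ n)).op))
  [h1 : ∀ n : ℕ, Injective (I.obj (op n))]
  [hm : ∀ k : ℕᵒᵖ, Mono (f.app k)]

/-- Projection to the kernel of the transition map coming from the splitting. -/
noncomputable def kerπ (n : ℕ) :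
    I.obj (op (n+1)) ⟶ kernel (I.map (homOfLE (Nat.le_succ n)).op) :=
  kernel.lift _ (𝟙 _ - I.map (homOfLE (Nat.le_succ n)).op ≫ (sp n).section_)
    (by simp [Preadditive.sub_comp, Category.assoc, (sp n).id])

omit h1 in lemma kerπ_ι (n : ℕ) :
    kerπ I sp n ≫ kernel.ι _ =
      𝟙 _ - I.map (homOfLE (Nat.le_succ n)).op ≫ (sp n).section_ :=
  kernel.lift_ι _ _ _

omit h1 in lemma ι_kerπ (n : ℕ) :
    kernel.ι (I.map (homOfLE (Nat.le_succ n)).op) ≫ kerπ I sp n = 𝟙 _ := by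
  rw [← cancel_mono (kernel.ι (I.map (homOfLE (Nat.le_succ n)).op)), Category.assoc, kerπ_ι]
  simp [Preadditive.comp_sub, kernel.condition_assoc]

/-- One step of the inductive lifting. -/
noncomputable def stepMap (n : ℕ) (h : Y.obj (op n) ⟶ I.obj (op n)) :
    Y.obj (op (n+1)) ⟶ I.obj (op (n+1)) :=
  Y.map (homOfLE (Nat.le_succ n)).op ≫ h ≫ (sp n).section_ +
    Injective.factorThru (g.app (op (n+1)) ≫ kerπ I sp n ≫ kernel.ι _) (f.app (op (n+1))) ≫
      kerπ I sp n ≫ kernel.ι _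

lemma stepMap_natural (n : ℕ) (h : Y.obj (op n) ⟶ I.obj (op n)) :
    stepMap I X Y f g sp n h ≫ I.map (homOfLE (Nat.le_succ n)).op =
      Y.map (homOfLE (Nat.le_succ n)).op ≫ h := by
  simp [stepMap, Preadditive.add_comp, Category.assoc, (sp n).id, kernel.condition]

lemma stepMap_factor (n : ℕ) (h : Y.obj (op n) ⟶ I.obj (op n))
    (hfac : f.app (op n) ≫ h = g.app (op n)) :
    f.app (op (n+1)) ≫ stepMap I X Y f g sp n h = g.app (op (n+1)) := by
  have hnatf := f.naturality (homOfLE (Nat.le_succ n)).op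
  have hnatg := g.naturality (homOfLE (Nat.le_succ n)).op
  rw [stepMap, Preadditive.comp_add, ← Category.assoc (f.app _), ← hnatf,
    ← Category.assoc (f.app _), Injective.comp_factorThru]
  rw [Category.assoc, Category.assoc, ← Category.assoc (f.app (op n)), hfac]
  have e1 : (kerπ I sp n ≫ kernel.ι _) ≫ kerπ I sp n ≫ kernel.ι _ =
      kerπ I sp n ≫ kernel.ι (I.map (homOfLE (Nat.le_succ n)).op) := by
    rw [Category.assoc, ← Category.assoc (kernel.ι _), ι_kerπ, Category.id_comp]
  rw [e1, kerπ_ι, ← Category.assoc (X.map _), hnatg]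
  simp [Preadditive.comp_sub, Category.assoc]

/-- The inductively defined lifting. -/
noncomputable def eL : ∀ n : ℕ, Y.obj (op n) ⟶ I.obj (op n)
  | 0 => Injective.factorThru (g.app (op 0)) (f.app (op 0))
  | n+1 => stepMap I X Y f g sp n (eL n)

lemma eL_factor : ∀ n : ℕ, f.app (op n) ≫ eL I X Y f g sp n = g.app (op n)
  | 0 => Injective.comp_factorThru _ _
  | n+1 => stepMap_factor I X Y f g sp n _ (eL_factor n)

lemma injective_of_components
    (h2 : ∀ n : ℕ, IsSplitEpi (I.map (homOfLE (Nat.le_succ n)).op)) :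
    Injective I := by
  constructor
  intro A B gg ff hff
  haveI : ∀ k : ℕᵒᵖ, Mono (ff.app k) := fun k => inferInstance
  let sp : ∀ n : ℕ, SplitEpi (I.map (homOfLE (Nat.le_succ n)).op) :=
    fun n => (h2 n).exists_splitEpi.some
  refine ⟨NatTrans.ofOpSequence (fun n => eL I A B ff gg sp n) ?_, ?_⟩
  · intro n
    exact (stepMap_natural I A B ff gg sp n (eL I A B ff gg sp n)).symm
  · ext k
    obtain ⟨n⟩ := k
    exact eL_factor I A B ff gg sp n

end Backward
end InvSysAux

open InvSysAux in
/-- Let `𝒜` be an abelian category with enough injectives in which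
inverse limits over `ℕ` exist.  An inverse system `(Iₙ, dₙ)` (an object of
`ℕᵒᵖ ⥤ 𝒜`) is injective if and only if each `Iₙ` is injective in `𝒜` and each
transition map `dₙ : I_{n+1} → Iₙ` is a split epimorphism. -/
theorem injective_inverse_system_iff (𝒜 : Type*) [Category 𝒜] [Abelian 𝒜]
    [EnoughInjectives 𝒜] [Limits.HasLimitsOfShape ℕᵒᵖ 𝒜]
    (I : ℕᵒᵖ ⥤ 𝒜) :
    Injective I ↔
      (∀ n : ℕ, Injective (I.obj (Opposite.op n))) ∧
      (∀ n : ℕ, IsSplitEpi (I.map (homOfLE (Nat.le_succ n)).op)) := by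
  constructor
  · intro hI
    exact ⟨fun n => injective_component I n, fun n => isSplitEpi_transition I n⟩
  · rintro ⟨hinj, hsplit⟩
    haveI : ∀ n : ℕ, Injective (I.obj (op n)) := hinj
    exact injective_of_components I hsplit
end

section
/- Let $G$ be a finitely generated free abelian group, $K$ a field, and $\chi : G \to K^\times$ a nontrivial character. Then the group cohomology $H^p(G, K(\chi))$ vanishes for all $p \geq 0$, where $K(\chi)$ denotes $K$ with $G$-action via $\chi$. -/
open CategoryTheory

/-- The one-dimensional representation `K(χ)` of `G` on `K`, where `g ∈ G` acts by
multiplication by `χ(g)`. -/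
noncomputable def charRep {K : Type} [Field K] {G : Type} [CommGroup G]
    (χ : G →* Kˣ) : Representation K G K :=
  (Units.coeHom (Module.End K K)).comp
    ((Units.map (algebraMap K (Module.End K K)).toMonoidHom).comp χ)

open CategoryTheory Limits

/-- `homologyMap` commutes with scalar multiplication. -/
lemma homologyMap_smul_aux {R : Type*} [Semiring R] {C : Type*} [Category C] [Preadditive C]
    [CategoryTheory.Linear R C] {ι : Type*} {c : ComplexShape ι}
    {X Y : HomologicalComplex C c} (f : X ⟶ Y) (r : R) (i : ι)
    [X.HasHomology i] [Y.HasHomology i] :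
    HomologicalComplex.homologyMap (r • f) i = r • HomologicalComplex.homologyMap f i := by
  have h : (HomologicalComplex.shortComplexFunctor C c i).map (r • f)
      = r • (HomologicalComplex.shortComplexFunctor C c i).map f := rfl
  dsimp only [HomologicalComplex.homologyMap]
  rw [h, ShortComplex.homologyMap_smul]
  rfl

/-- The endomorphism of a representation of an abelian group given by the action of a fixed
group element. -/
lemma rep_rho_comm {K : Type} [Field K] {G : Type} [CommGroup G]
    (X : Rep K G) (a b : G) (v : X) : X.ρ a (X.ρ b v) = X.ρ b (X.ρ a v) := by
  calc (X.ρ a) ((X.ρ b) v) = (X.ρ a * X.ρ b) v := rfl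
    _ = X.ρ (a * b) v := by rw [map_mul]
    _ = X.ρ (b * a) v := by rw [mul_comm]
    _ = (X.ρ b * X.ρ a) v := by rw [map_mul]
    _ = (X.ρ b) ((X.ρ a) v) := rfl

/-- The endomorphism of a representation of an abelian group given by the action of a fixed
group element. -/
noncomputable def actHom {K : Type} [Field K] {G : Type} [CommGroup G] (g : G)
    (X : Rep K G) : X ⟶ X :=
  Rep.ofHom ⟨X.ρ g, fun h => by
    apply LinearMap.ext
    intro v
    exact rep_rho_comm X g h v⟩

lemma actHom_naturality {K : Type} [Field K] {G : Type} [CommGroup G] (g : G)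
    {X Y : Rep K G} (f : X ⟶ Y) : actHom g X ≫ f = f ≫ actHom g Y := by
  ext : 1
  ext v
  exact Rep.hom_comm_apply f g v

/-- Let `G` be a finitely generated free abelian group, `K` a field and
`χ : G → Kˣ` a nontrivial character.  Then the group cohomology `Hᵖ(G, K(χ))`
vanishes for all `p ≥ 0`. -/
theorem groupCohomology_char_nontrivial_isZero
    {K : Type} [Field K] {G : Type} [CommGroup G] (r : ℕ)
    (hG : Nonempty (G ≃* Multiplicative (Fin r → ℤ)))
    (χ : G →* Kˣ) (hχ : χ ≠ 1) (p : ℕ) :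
    Limits.IsZero (groupCohomology (Rep.of (charRep χ)) p) := by
  classical
  -- find an element on which `χ` is nontrivial
  obtain ⟨g, hg⟩ : ∃ g : G, χ g ≠ 1 := by
    by_contra h
    push_neg at h
    exact hχ (MonoidHom.ext fun x => by simp [h x])
  set A : Rep K G := Rep.of (charRep χ) with hA
  set c : K := ((χ g : Kˣ) : K) with hc
  have hc1 : c ≠ 1 := fun h => hg (Units.ext h)
  -- the action of `g` on `A` is multiplication by `c`
  have hAρ : ∀ v : K, (A.ρ g) v = c * v := by
    intro v
    show (charRep χ g) v = c * v
    simp [charRep, Module.algebraMap_end_apply, smul_eq_mul]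
    exact Or.inl rfl
  have hAact : actHom g A = c • 𝟙 A := by
    ext : 1
    apply Representation.IntertwiningMap.ext
    apply LinearMap.ext
    intro v
    show (A.ρ g) v = (c • 𝟙 A).hom v
    rw [Rep.smul_hom, hAρ]
    rfl
  -- a projective resolution of the trivial representation
  set T : Rep K G := Rep.trivial K G K with hT
  obtain ⟨P⟩ : Nonempty (ProjectiveResolution T) := HasProjectiveResolution.out
  have hTact : actHom g T = 𝟙 T := by
    ext : 1
    apply Representation.IntertwiningMap.ext
    apply LinearMap.ext
    intro v
    exact Rep.trivial_ρ_apply g v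
  -- the chain map given by the action of `g`
  set φ : P.complex ⟶ P.complex :=
    { f := fun n => actHom g (P.complex.X n)
      comm' := fun i j _ => actHom_naturality g (P.complex.d i j) } with hφdef
  -- `φ` lifts the identity of `T`
  have hφπ : φ ≫ P.π = P.π ≫ (ChainComplex.single₀ (Rep K G)).map (𝟙 T) := by
    rw [CategoryTheory.Functor.map_id, Category.comp_id]
    apply HomologicalComplex.hom_ext
    intro n
    cases n with
    | zero =>
        rw [HomologicalComplex.comp_f]
        show actHom g (P.complex.X 0) ≫ P.π.f 0 = P.π.f 0
        rw [actHom_naturality g (P.π.f 0)]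
        show P.π.f 0 ≫ actHom g T = P.π.f 0
        rw [hTact]
        exact Category.comp_id (P.π.f 0)
    | succ n =>
        exact (HomologicalComplex.isZero_single_obj_X
          (ComplexShape.down ℕ) 0 T (n+1) (by simp)).eq_of_tgt _ _
  have hom : Homotopy φ (𝟙 P.complex) :=
    ProjectiveResolution.liftHomotopy (𝟙 T) φ (𝟙 P.complex) hφπ (by simp)
  -- the cochain complex `Hom(P, A)`
  set Q : CochainComplex (ModuleCat K) ℕ := P.complex.linearYonedaObj K A with hQ
  -- the endomorphism of `Q` induced by `φ`
  set q : Q ⟶ Q :=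
    { f := fun i => ModuleCat.ofHom (CategoryTheory.Linear.leftComp K A (φ.f i))
      comm' := fun i j _ => by
        ext x
        obtain ⟨y, rfl⟩ : ∃ y : P.complex.X i ⟶ A, (show ((Q.X i : ModuleCat K) : Type) from y) = x := ⟨x, rfl⟩
        show P.complex.d j i ≫ φ.f i ≫ y = φ.f j ≫ P.complex.d j i ≫ y
        rw [← Category.assoc, ← φ.comm j i, Category.assoc] } with hq
  -- homotopy between `q` and the identity, coming from `hom`
  have homQ : Homotopy q (𝟙 Q) :=
    { hom := fun i j => (ModuleCat.ofHom (CategoryTheory.Linear.leftComp K A (hom.hom j i)) : Q.X i ⟶ Q.X j)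
      zero := fun i j h => by
        apply ModuleCat.hom_ext
        apply LinearMap.ext
        intro x
        obtain ⟨y, rfl⟩ : ∃ y : P.complex.X i ⟶ A, (show ((Q.X i : ModuleCat K) : Type) from y) = x := ⟨x, rfl⟩
        show hom.hom j i ≫ y = (0 : Q.X i ⟶ Q.X j) y
        rw [hom.zero j i h, Limits.zero_comp]
        rfl
      comm := fun i => by
        erw [dNext_eq _ (show (ComplexShape.up ℕ).Rel i (i+1) by simp), prevD_nat]
        apply ModuleCat.hom_ext
        apply LinearMap.ext
        intro x
        obtain ⟨y, rfl⟩ : ∃ y : P.complex.X i ⟶ A, (show ((Q.X i : ModuleCat K) : Type) from y) = x := ⟨x, rfl⟩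
        have hP : φ.f i = P.complex.d i (i-1) ≫ hom.hom (i-1) i +
            hom.hom i (i+1) ≫ P.complex.d (i+1) i + 𝟙 (P.complex.X i) := by
          have := hom.comm i
          rw [dNext_nat, prevD_eq hom.hom
            (show (ComplexShape.down ℕ).Rel (i+1) i by simp)] at this
          exact this
        show φ.f i ≫ y =
          (hom.hom i (i+1) ≫ P.complex.d (i+1) i ≫ y) +
          (P.complex.d i (i-1) ≫ hom.hom (i-1) i ≫ y) + y
        rw [hP]
        rw [Preadditive.add_comp, Preadditive.add_comp, Category.id_comp,
          Category.assoc, Category.assoc]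
        abel }
  -- hence `q` induces the identity on homology
  have h1 : HomologicalComplex.homologyMap q p = 𝟙 (Q.homology p) := by
    rw [homQ.homologyMap_eq, HomologicalComplex.homologyMap_id]
  -- but `q` is multiplication by `c`
  have h2 : q = c • 𝟙 Q := by
    apply HomologicalComplex.hom_ext
    intro i
    rw [HomologicalComplex.smul_f_apply, HomologicalComplex.id_f]
    ext x
    obtain ⟨y, rfl⟩ : ∃ y : P.complex.X i ⟶ A, (show ((Q.X i : ModuleCat K) : Type) from y) = x := ⟨x, rfl⟩
    show actHom g (P.complex.X i) ≫ y = c • y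
    rw [actHom_naturality g y, hAact, CategoryTheory.Linear.comp_smul, Category.comp_id]
  -- conclude that the identity of the homology is zero
  have h3 : (𝟙 (Q.homology p)) = c • 𝟙 (Q.homology p) := by
    conv_lhs => rw [← h1]
    rw [h2, homologyMap_smul_aux, HomologicalComplex.homologyMap_id]
  have h4 : (𝟙 (Q.homology p)) = 0 := by
    have h5 : ((1 : K) - c) • (𝟙 (Q.homology p)) = 0 := by
      rw [sub_smul, one_smul, ← h3, sub_self]
    have h6 : ((1 : K) - c) ≠ 0 := sub_ne_zero.mpr (fun h => hc1 h.symm)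
    calc 𝟙 (Q.homology p) = (((1:K)-c)⁻¹ * ((1:K)-c)) • 𝟙 (Q.homology p) := by
          rw [inv_mul_cancel₀ h6, one_smul]
      _ = ((1:K)-c)⁻¹ • (((1:K)-c) • 𝟙 (Q.homology p)) := by rw [mul_smul]
      _ = 0 := by rw [h5, smul_zero]
  have hzero : IsZero (Q.homology p) := by
    rw [IsZero.iff_id_eq_zero]
    exact h4
  exact ((hzero.of_iso (P.isoExt p A)).of_iso (groupCohomologyIsoExt A p))
end
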